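/- For all octonions x and y, the endomorphisms x̂ and ŷ of 𝕆 × 𝕆 satisfy x̂ ∘ ŷ + ŷ ∘ x̂ = −2⟨x,y⟩ times the identity map of 𝕆 × 𝕆. In particular, x̂ ∘ x̂ = −‖x‖² · id. -/

import Mathlib

noncomputable section

/-- The octonions, realized as pairs of real quaternions (Cayley–Dickson construction). -/
abbrev Octonion : Type := Quaternion ℝ × Quaternion ℝ

/-- Octonion multiplication: `(a,b)·(c,d) = (a·c − conj(d)·b, d·a + b·conj(c))`. -/
def omul (x y : Octonion) : Octonion :=
  (x.1 * y.1 - star y.2 * x.2, y.2 * x.1 + x.2 * star y.1)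

/-- Octonion conjugation: `conj (a,b) = (conj a, −b)`. -/
def oconj (x : Octonion) : Octonion := (star x.1, -x.2)

/-- The unit octonion `1 = (1,0)`. -/
def oone : Octonion := (1, 0)

/-- The real inner product `⟨(a,b),(c,d)⟩ = Re(a·conj c) + Re(b·conj d)` on the octonions. -/
def oinner (x y : Octonion) : ℝ := (x.1 * star y.1).re + (x.2 * star y.2).re

/-- The Clifford-algebra embedding: `x̂ (y,z) = (−conj(x)·z, x·y)` on `𝕆 × 𝕆`. -/
def hat (x : Octonion) (p : Octonion × Octonion) : Octonion × Octonion :=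
  (-(omul (oconj x) p.2), omul x p.1)

set_option maxHeartbeats 2000000 in
/-- Auxiliary: the anticommutation relation. -/
theorem hat_anticomm_aux (x y : Octonion) (p : Octonion × Octonion) :
    hat x (hat y p) + hat y (hat x p) = (-(2 * oinner x y)) • p := by
  obtain ⟨⟨a, b⟩, ⟨c, d⟩⟩ := p
  obtain ⟨x1, x2⟩ := x
  obtain ⟨y1, y2⟩ := y
  ext <;>
  · simp only [hat, omul, oconj, oinner, Prod.fst, Prod.snd, Prod.mk_add_mk, Prod.smul_mk,
      Prod.neg_mk, Prod.fst_add, Prod.snd_add, Prod.fst_neg, Prod.snd_neg,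
      Quaternion.re_add, Quaternion.imI_add, Quaternion.imJ_add, Quaternion.imK_add,
      Quaternion.re_sub, Quaternion.imI_sub, Quaternion.imJ_sub, Quaternion.imK_sub,
      Quaternion.re_neg, Quaternion.imI_neg, Quaternion.imJ_neg, Quaternion.imK_neg,
      Quaternion.re_mul, Quaternion.imI_mul, Quaternion.imJ_mul, Quaternion.imK_mul,
      Quaternion.re_star, Quaternion.imI_star, Quaternion.imJ_star, Quaternion.imK_star,
      Quaternion.re_smul, Quaternion.imI_smul, Quaternion.imJ_smul, Quaternion.imK_smul,
      smul_eq_mul]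
    ring

/-- For all octonions `x, y`, `x̂ ∘ ŷ + ŷ ∘ x̂ = −2⟨x,y⟩ • id` on `𝕆 × 𝕆`.
In particular, `x̂ ∘ x̂ = −‖x‖² • id`. -/
theorem hat_anticommute :
    (∀ (x y : Octonion) (p : Octonion × Octonion),
      hat x (hat y p) + hat y (hat x p) = (-(2 * oinner x y)) • p) ∧
    (∀ (x : Octonion) (p : Octonion × Octonion),
      hat x (hat x p) = (-(oinner x x)) • p) := by
  refine ⟨hat_anticomm_aux, fun x p => ?_⟩
  have h := hat_anticomm_aux x x p
  have h2 : (2:ℝ) • hat x (hat x p) = (2:ℝ) • ((-(oinner x x)) • p) := by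
    rw [two_smul, h, smul_smul]
    ring_nf
  exact smul_right_injective _ two_ne_zero h2
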